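/- Let n ≥ 2, k > 0, β ∈ ℝ, and ϑ₁,…,ϑₙ ∈ ℝ; set B := (1/n)(∑ᵢϑᵢ)² − ∑ᵢϑᵢ² and Πᵢⱼ := (μ−ϑᵢ)(μ−ϑⱼ) with μ := (1/n)∑ₗϑₗ. Then the n×n complex matrix 𝒮(k) with entries 𝒮ᵢⱼ(k) = 2/n − δᵢⱼ − 2ikβΠᵢⱼ/(1+ikβB) is unitary. -/

import Mathlib

open Complex Matrix in
theorem scattering_matrix_unitary (n : ℕ) (hn : 2 ≤ n) (k β : ℝ) (hk : 0 < k)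
    (ϑ : Fin n → ℝ)
    (B : ℝ) (hB : B = (1 / (n : ℝ)) * (∑ i, ϑ i) ^ 2 - ∑ i, (ϑ i) ^ 2)
    (P : Matrix (Fin n) (Fin n) ℝ)
    (hP : ∀ i j, P i j =
      ((1 / (n : ℝ)) * ∑ l, ϑ l - ϑ i) * ((1 / (n : ℝ)) * ∑ l, ϑ l - ϑ j))
    (hden : (1 : ℂ) + I * k * β * B ≠ 0)
    (S : Matrix (Fin n) (Fin n) ℂ)
    (hS : ∀ i j, S i j = 2 / (n : ℂ) - (if i = j then 1 else 0)
      - 2 * I * k * β * (P i j) / (1 + I * k * β * B)) :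
    S * Sᴴ = 1 ∧ Sᴴ * S = 1 := by
  have hn0 : (n : ℝ) ≠ 0 := by
    have : 0 < n := lt_of_lt_of_le (by norm_num) hn
    exact_mod_cast this.ne'
  have hnc0 : (n : ℂ) ≠ 0 := by exact_mod_cast hn0
  obtain ⟨μ, hμ⟩ : ∃ x : ℝ, x = (1 / (n : ℝ)) * ∑ l, ϑ l := ⟨_, rfl⟩
  rw [← hμ] at hP
  obtain ⟨den, hden_def⟩ : ∃ x : ℂ, x = 1 + I * (k : ℂ) * (β : ℂ) * (B : ℂ) := ⟨_, rfl⟩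
  rw [← hden_def] at hden hS
  obtain ⟨c, hc⟩ : ∃ x : ℂ, x = -(2 * I * (k : ℂ) * (β : ℂ)) / den := ⟨_, rfl⟩
  obtain ⟨c', hc'⟩ : ∃ x : ℂ, x = (starRingEnd ℂ) c := ⟨_, rfl⟩
  obtain ⟨w, hw⟩ : ∃ x : Fin n → ℂ, x = fun i => ((μ - ϑ i : ℝ) : ℂ) := ⟨_, rfl⟩
  have hwconj : ∀ i, (starRingEnd ℂ) (w i) = w i := fun i => by
    simp [hw, Complex.conj_ofReal]
  have hden2 : (1 : ℂ) - I * (k : ℂ) * (β : ℂ) * (B : ℂ) ≠ 0 := by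
    have h := star_ne_zero.mpr hden
    have : star den = 1 - I * (k : ℂ) * (β : ℂ) * (B : ℂ) := by
      simp [hden_def, Complex.star_def, map_add, _root_.map_mul, Complex.conj_ofReal]
      ring
    rwa [this] at h
  have hcc : c' = (2 * I * (k : ℂ) * (β : ℂ)) / (1 - I * (k : ℂ) * (β : ℂ) * (B : ℂ)) := by
    rw [hc', hc, hden_def]
    simp [map_div₀, map_add, _root_.map_mul, Complex.conj_ofReal, map_ofNat]
    ring
  have hkey : c + c' + c * c' * (B : ℂ) = 0 := by
    have h1 : (1 : ℂ) + I * (k : ℂ) * (β : ℂ) * (B : ℂ) ≠ 0 := hden_def ▸ hden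
    rw [hcc, hc, hden_def]
    field_simp [Complex.I_sq]
    ring
  have hreal1 : ∑ l, (μ - ϑ l) = 0 := by
    rw [Finset.sum_sub_distrib, Finset.sum_const, Finset.card_univ, Fintype.card_fin,
      nsmul_eq_mul, hμ]
    field_simp
    ring
  have hsum1 : ∑ l, w l = 0 := by
    simp only [hw]
    rw [← Complex.ofReal_sum, hreal1, Complex.ofReal_zero]
  have hreal2 : ∑ l, (μ - ϑ l) * (μ - ϑ l) = -B := by
    have expand : ∀ l, (μ - ϑ l) * (μ - ϑ l) = μ ^ 2 - 2 * μ * ϑ l + ϑ l ^ 2 :=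
      fun l => by ring
    rw [Finset.sum_congr rfl fun l _ => expand l]
    rw [Finset.sum_add_distrib, Finset.sum_sub_distrib, Finset.sum_const,
      Finset.card_univ, Fintype.card_fin, nsmul_eq_mul, ← Finset.mul_sum, hB, hμ]
    field_simp
    ring
  have hsum2 : ∑ l, w l * w l = -(B : ℂ) := by
    simp only [hw, ← Complex.ofReal_mul]
    rw [← Complex.ofReal_sum, hreal2, Complex.ofReal_neg]
  have hPc : ∀ i j, ((P i j : ℝ) : ℂ) = w i * w j := by
    intro i j
    simp [hP, hw, Complex.ofReal_mul]
  have hS' : ∀ i j, S i j = (2 / (n : ℂ) + c * w i * w j) - (if i = j then 1 else 0) := by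
    intro i j
    rw [hS i j, hPc i j, hc]
    ring
  have hSconj : ∀ i j, (starRingEnd ℂ) (S i j)
      = (2 / (n : ℂ) + c' * w i * w j) - (if i = j then 1 else 0) := by
    intro i j
    rw [hS' i j]
    simp only [map_sub, map_add, map_div₀, _root_.map_mul, hwconj,
      Complex.conj_natCast, map_ofNat, apply_ite (starRingEnd ℂ),
      _root_.map_one, _root_.map_zero, ← hc']
  have main : S * Sᴴ = 1 := by
    ext i j
    simp only [Matrix.mul_apply, Matrix.conjTranspose_apply, Complex.star_def]
    have expand : ∀ l, S i l * (starRingEnd ℂ) (S j l) =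
        ((2 / (n : ℂ)) * (2 / (n : ℂ))
          + ((2 / (n : ℂ)) * c' * w j) * w l
          + ((c * (2 / (n : ℂ)) * w i) * w l
          + ((c * c' * w i * w j) * (w l * w l))))
        - (if i = l then (2 / (n : ℂ) + c' * w j * w l) else 0)
        - (if j = l then (2 / (n : ℂ) + c * w i * w l) else 0)
        + (if i = l then (if j = l then (1:ℂ) else 0) else 0) := by
      intro l
      rw [hS' i l, hSconj j l]
      by_cases h1 : i = l <;> by_cases h2 : j = l <;>
        simp only [h1, h2, eq_self_iff_true, if_true, if_false, ite_true, ite_false] <;>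
        ring
    rw [Finset.sum_congr rfl fun l _ => expand l]
    simp only [Finset.sum_add_distrib, Finset.sum_sub_distrib]
    rw [Finset.sum_const, Finset.card_univ, Fintype.card_fin, nsmul_eq_mul,
      ← Finset.mul_sum, ← Finset.mul_sum, ← Finset.mul_sum, hsum1, hsum2,
      Finset.sum_ite_eq, Finset.sum_ite_eq, Finset.sum_ite_eq]
    simp only [Finset.mem_univ, if_true]
    rw [Matrix.one_apply]
    have hij : (if j = i then (1:ℂ) else 0) = (if i = j then 1 else 0) := by
      simp [eq_comm]
    rw [hij]
    have hfrac : (n : ℂ) * (2 / (n : ℂ) * (2 / (n : ℂ))) = 2 / (n : ℂ) + 2 / (n : ℂ) := by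
      field_simp
      ring
    linear_combination hfrac - (w i * w j) * hkey
  exact ⟨main, mul_eq_one_comm.mp main⟩
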